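/- Suppose the VaR minimization problem min_{x∈X} VaR_β(x) has a minimizer x* such that the argmin set M_β(x*) of m ↦ m + (1/(1-β)) Σ_i p_i (x*^T y^i - m)_+ is a singleton {m*}. For each ε > 0 let x^ε minimize VaR_{β,ε} over X and set m_ε = VaR_{β,ε}(x^ε). Then lim_{ε↓0} m_ε = m* = min_{x∈X} VaR_β(x), and every accumulation point of {x^{ε_ν}} for ε_ν ↓ 0 is a minimizer of VaR_β over X. -/

import Mathlib

open Filter Set Topology
private lemma max0_combo (a b u v : ℝ) (ha : 0 ≤ a) (hb : 0 ≤ b) :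
    max 0 (a * u + b * v) ≤ a * max 0 u + b * max 0 v := by
  apply max_le
  · positivity
  · have h1 : a * u ≤ a * max 0 u := mul_le_mul_of_nonneg_left (le_max_right _ _) ha
    have h2 : b * v ≤ b * max 0 v := mul_le_mul_of_nonneg_left (le_max_right _ _) hb
    linarith

private lemma cvx_f (γ : ℝ) (hγ : 0 ≤ γ) (k : ℕ) (p : Fin k → ℝ) (hp : ∀ i, 0 ≤ p i)
    (b : Fin k → ℝ) :
    ConvexOn ℝ Set.univ (fun m : ℝ => m + γ * ∑ i, p i * max 0 (b i - m)) := by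
  refine ⟨convex_univ, ?_⟩
  intro x _ z _ a t ha ht hat
  simp only [smul_eq_mul]
  have key : ∀ i : Fin k, p i * max 0 (b i - (a * x + t * z)) ≤
      a * (p i * max 0 (b i - x)) + t * (p i * max 0 (b i - z)) := by
    intro i
    have h0 := max0_combo a t (b i - x) (b i - z) ha ht
    have hbi : b i - (a * x + t * z) = a * (b i - x) + t * (b i - z) := by
      linear_combination (-(b i)) * hat
    rw [hbi]
    have := mul_le_mul_of_nonneg_left h0 (hp i)
    nlinarith [this]
  have hS : ∑ i, p i * max 0 (b i - (a * x + t * z)) ≤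
      a * (∑ i, p i * max 0 (b i - x)) + t * (∑ i, p i * max 0 (b i - z)) := by
    rw [Finset.mul_sum, Finset.mul_sum, ← Finset.sum_add_distrib]
    exact Finset.sum_le_sum fun i _ => key i
  have := mul_le_mul_of_nonneg_left hS hγ
  nlinarith [this]

private lemma convex_gap {f : ℝ → ℝ} (hf : ConvexOn ℝ Set.univ f) {m0 η a v : ℝ}
    (hη : 0 < η) (ha : 0 < a) (h1 : f m0 + a ≤ f (m0 - η)) (h2 : f m0 + a ≤ f (m0 + η))
    (hv : f v < f m0 + a) : |v - m0| < η := by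
  by_contra hcon
  push_neg at hcon
  rcases le_abs.mp hcon with h | h
  · set d := v - m0 with hd
    have hd0 : 0 < d := lt_of_lt_of_le hη h
    have ht1 : η / d ≤ 1 := by rw [div_le_one hd0]; exact h
    have ht0 : 0 < η / d := div_pos hη hd0
    have ha' : (0:ℝ) ≤ 1 - η / d := by linarith
    have hcomb := hf.2 (Set.mem_univ m0) (Set.mem_univ v) ha' ht0.le (by ring)
    simp only [smul_eq_mul] at hcomb
    have heq : (1 - η / d) * m0 + (η / d) * v = m0 + η := by
      field_simp
      ring
    rw [heq] at hcomb
    have hfv : a ≤ (η / d) * (f v - f m0) := by nlinarith [hcomb, h2]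
    have hpos : 0 < f v - f m0 := by nlinarith [hfv, ht0, ht1]
    have hfin : (η / d) * (f v - f m0) ≤ 1 * (f v - f m0) :=
      mul_le_mul_of_nonneg_right ht1 hpos.le
    linarith
  · set d := m0 - v with hd
    have hd0 : 0 < d := by simp only [hd]; linarith [neg_sub v m0 ▸ h]
    have ht1 : η / d ≤ 1 := by rw [div_le_one hd0]; linarith [neg_sub v m0 ▸ h]
    have ht0 : 0 < η / d := div_pos hη hd0
    have ha' : (0:ℝ) ≤ 1 - η / d := by linarith
    have hcomb := hf.2 (Set.mem_univ m0) (Set.mem_univ v) ha' ht0.le (by ring)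
    simp only [smul_eq_mul] at hcomb
    have heq : (1 - η / d) * m0 + (η / d) * v = m0 - η := by
      field_simp
      ring
    rw [heq] at hcomb
    have hfv : a ≤ (η / d) * (f v - f m0) := by nlinarith [hcomb, h1]
    have hpos : 0 < f v - f m0 := by nlinarith [hfv, ht0, ht1]
    have hfin : (η / d) * (f v - f m0) ≤ 1 * (f v - f m0) :=
      mul_le_mul_of_nonneg_right ht1 hpos.le
    linarith

private lemma aux_mapClusterPt_prod {α X Y : Type*} [TopologicalSpace X] [TopologicalSpace Y]
    {F : Filter α} {u : α → X} {v : α → Y} {x : X} {y : Y}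
    (hu : MapClusterPt x F u) (hv : Filter.Tendsto v F (nhds y)) :
    MapClusterPt (x, y) F fun a => (u a, v a) := by
  rw [mapClusterPt_iff_frequently] at hu ⊢
  intro s hs
  rcases mem_nhds_prod_iff.mp hs with ⟨s1, h1, s2, h2, hsub⟩
  exact ((hu s1 h1).and_eventually (hv.eventually h2)).mono fun a ha => hsub ⟨ha.1, ha.2⟩

theorem stmt_19
    (n k : ℕ) (β : ℝ) (hβ : β ∈ Set.Ioo (0:ℝ) 1)
    (p : Fin k → ℝ) (hp : ∀ i, 0 < p i) (hp1 : ∑ i, p i = 1)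
    (y : Fin k → Fin n → ℝ)
    (X : Set (Fin n → ℝ)) (hX : IsCompact X) (hXne : X.Nonempty)
    -- the discretized CVaR minimand and its argmin set
    (f : (Fin n → ℝ) → ℝ → ℝ)
    (hf : f = fun x m => m + (1 / (1 - β)) * ∑ i, p i * max 0 ((∑ j, x j * y i j) - m))
    (M : (Fin n → ℝ) → Set ℝ)
    (hM : M = fun x => {m | ∀ m' : ℝ, f x m ≤ f x m'})
    -- the smoothing family and the smoothed minimand
    (c : ℝ) (hc : 0 < c)
    (ρ : ℝ → ℝ → ℝ)
    (hρnn : ∀ e, 0 < e → ∀ t, 0 ≤ ρ e t)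
    (hρsc : ∀ e, 0 < e → StrictConvexOn ℝ Set.univ (ρ e))
    (hρC2 : ∀ e, 0 < e → ContDiff ℝ 2 (ρ e))
    (hρ' : ∀ e, 0 < e → ∀ t, |deriv (ρ e) t| ≤ 1)
    (happrox : ∀ e, 0 < e → ∀ t, |max 0 t - ρ e t| ≤ c * e)
    (g : ℝ → (Fin n → ℝ) → ℝ → ℝ)
    (hg : g = fun e x m =>
      m + (1 / (1 - β)) * ∑ i, p i * ρ e ((∑ j, x j * y i j) - m))
    -- VaR_{β,ε}(x): the unique minimizer of the smoothed minimand
    (V : ℝ → (Fin n → ℝ) → ℝ)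
    (hVmin : ∀ e, 0 < e → ∀ x, ∀ m : ℝ, g e x (V e x) ≤ g e x m)
    (hVuniq : ∀ e, 0 < e → ∀ x, ∀ m0 : ℝ, (∀ m : ℝ, g e x m0 ≤ g e x m) → m0 = V e x)
    -- the minimizer x* of VaR_β over X, with singleton argmin set {m*}
    (xstar : Fin n → ℝ) (mstar : ℝ)
    (hxstar : xstar ∈ X) (hMstar : M xstar = {mstar})
    (hVaRmin : ∀ x ∈ X, ∀ mx ∈ M x, mstar ≤ mx)
    -- for each ε > 0, x^ε globally minimizes V ε over X
    (xε : ℝ → Fin n → ℝ)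
    (hxε : ∀ e, 0 < e → xε e ∈ X ∧ ∀ x' ∈ X, V e (xε e) ≤ V e x') :
    Filter.Tendsto (fun e => V e (xε e)) (nhdsWithin 0 (Set.Ioi 0)) (nhds mstar) ∧
    (∀ εν : ℕ → ℝ, (∀ ν, 0 < εν ν) →
      Filter.Tendsto εν Filter.atTop (nhds 0) →
      ∀ xinf : Fin n → ℝ,
        MapClusterPt xinf Filter.atTop (fun ν => xε (εν ν)) →
        xinf ∈ X ∧ ∀ x' ∈ X, ∀ m' ∈ M x', sInf (M xinf) ≤ m') := by
  obtain ⟨hβ0, hβ1⟩ := hβ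
  have h1β : 0 < 1 - β := by linarith
  set γ : ℝ := 1 / (1 - β) with hγdef
  have hγ1 : 1 < γ := by rw [hγdef, lt_div_iff₀ h1β]; linarith
  have hγ0 : 0 < γ := by linarith
  -- |f - g| ≤ c e γ
  have hfgm : ∀ e, 0 < e → ∀ x m, |f x m - g e x m| ≤ c * e * γ := by
    intro e he x m
    have hsplit : ∑ i, p i * (max 0 ((∑ j, x j * y i j) - m) - ρ e ((∑ j, x j * y i j) - m))
        = (∑ i, p i * max 0 ((∑ j, x j * y i j) - m))
          - ∑ i, p i * ρ e ((∑ j, x j * y i j) - m) := by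
      rw [← Finset.sum_sub_distrib]
      exact Finset.sum_congr rfl fun i _ => mul_sub _ _ _
    have hdiff : f x m - g e x m
        = γ * ∑ i, p i * (max 0 ((∑ j, x j * y i j) - m) - ρ e ((∑ j, x j * y i j) - m)) := by
      simp only [hf, hg]
      rw [hsplit]
      ring
    have hsum : |∑ i, p i * (max 0 ((∑ j, x j * y i j) - m) - ρ e ((∑ j, x j * y i j) - m))|
        ≤ c * e := by
      calc |∑ i, p i * (max 0 ((∑ j, x j * y i j) - m) - ρ e ((∑ j, x j * y i j) - m))|
          ≤ ∑ i, |p i * (max 0 ((∑ j, x j * y i j) - m) - ρ e ((∑ j, x j * y i j) - m))| :=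
            Finset.abs_sum_le_sum_abs _ _
        _ ≤ ∑ i, p i * (c * e) := by
            refine Finset.sum_le_sum fun i _ => ?_
            rw [abs_mul, abs_of_pos (hp i)]
            exact mul_le_mul_of_nonneg_left (happrox e he _) (hp i).le
        _ = c * e := by rw [← Finset.sum_mul, hp1, one_mul]
    rw [hdiff, abs_mul, abs_of_pos hγ0]
    calc γ * |∑ i, p i * (max 0 ((∑ j, x j * y i j) - m) - ρ e ((∑ j, x j * y i j) - m))|
        ≤ γ * (c * e) := mul_le_mul_of_nonneg_left hsum hγ0.le
      _ = c * e * γ := by ring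
  -- V e x is a 2ceγ-approximate minimizer of f x
  have hVf : ∀ e, 0 < e → ∀ x m, f x (V e x) ≤ f x m + 2 * (c * e * γ) := by
    intro e he x m
    have h1 := abs_le.mp (hfgm e he x (V e x))
    have h2 := abs_le.mp (hfgm e he x m)
    have h3 := hVmin e he x m
    linarith [h1.1, h1.2, h2.1, h2.2]
  -- joint continuity of f
  have hfc : Continuous (fun q : (Fin n → ℝ) × ℝ => f q.1 q.2) := by
    rw [hf]
    refine continuous_snd.add (continuous_const.mul (continuous_finset_sum _ fun i _ =>
      continuous_const.mul (continuous_const.max ?_)))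
    exact (continuous_finset_sum _ fun j _ =>
      ((continuous_apply j).comp continuous_fst).mul continuous_const).sub continuous_snd
  have hfc1 : ∀ m, Continuous (fun x => f x m) := fun m =>
    hfc.comp (continuous_id.prodMk continuous_const)
  have hA : Continuous (fun x : Fin n → ℝ => ∑ i, p i * ∑ j, x j * y i j) :=
    continuous_finset_sum _ fun i _ => continuous_const.mul
      (continuous_finset_sum _ fun j _ => (continuous_apply j).mul continuous_const)
  -- lower bounds on f
  have hlow : ∀ (x : Fin n → ℝ) (m : ℝ),
      m + γ * ((∑ i, p i * ∑ j, x j * y i j) - m) ≤ f x m ∧ m ≤ f x m := by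
    intro x m
    have hfxm : f x m = m + γ * ∑ i, p i * max 0 ((∑ j, x j * y i j) - m) := by rw [hf]
    have hnn : 0 ≤ ∑ i, p i * max 0 ((∑ j, x j * y i j) - m) :=
      Finset.sum_nonneg fun i _ => mul_nonneg (hp i).le (le_max_left _ _)
    have hge : (∑ i, p i * ∑ j, x j * y i j) - m
        ≤ ∑ i, p i * max 0 ((∑ j, x j * y i j) - m) := by
      have h1 : ∑ i, p i * ((∑ j, x j * y i j) - m)
          ≤ ∑ i, p i * max 0 ((∑ j, x j * y i j) - m) :=
        Finset.sum_le_sum fun i _ => mul_le_mul_of_nonneg_left (le_max_right _ _) (hp i).le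
      have h2 : ∑ i, p i * ((∑ j, x j * y i j) - m)
          = (∑ i, p i * ∑ j, x j * y i j) - m := by
        simp only [mul_sub]
        rw [Finset.sum_sub_distrib, ← Finset.sum_mul, hp1, one_mul]
      linarith
    constructor
    · rw [hfxm]
      nlinarith [mul_le_mul_of_nonneg_left hge hγ0.le]
    · rw [hfxm]; nlinarith [mul_nonneg hγ0.le hnn]
  -- convexity of f x
  have hcvx : ∀ x, ConvexOn ℝ Set.univ (f x) := by
    intro x
    rw [hf]
    exact cvx_f γ hγ0.le k p (fun i => (hp i).le) (fun i => ∑ j, x j * y i j)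
  -- mstar is the minimizer of f xstar
  have hmstarmin : ∀ m', f xstar mstar ≤ f xstar m' := by
    have : mstar ∈ M xstar := by rw [hMstar]; rfl
    rw [hM] at this; exact this
  -- V e xstar → mstar
  have hVxstar : Tendsto (fun e => V e xstar) (nhdsWithin 0 (Set.Ioi 0)) (nhds mstar) := by
    rw [Metric.tendsto_nhdsWithin_nhds]
    intro η hη
    have hnot : ∀ m : ℝ, m ≠ mstar → f xstar mstar < f xstar m := by
      intro m hm
      by_contra hcon
      push_neg at hcon
      have hmem : m ∈ M xstar := by
        rw [hM]
        intro m'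
        exact le_trans hcon (hmstarmin m')
      rw [hMstar] at hmem
      exact hm hmem
    set a : ℝ := min (f xstar (mstar - η)) (f xstar (mstar + η)) - f xstar mstar with hadef
    have ha : 0 < a := by
      have h1 := hnot (mstar - η) (by linarith)
      have h2 := hnot (mstar + η) (by linarith)
      have := lt_min h1 h2
      simp only [hadef]; linarith
    refine ⟨a / (2 * c * γ), by positivity, ?_⟩
    intro e heI hedist
    have he : 0 < e := heI
    rw [Real.dist_eq, sub_zero, abs_of_pos he] at hedist
    have h2ce : 2 * (c * e * γ) < a := by
      rw [lt_div_iff₀ (by positivity)] at hedist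
      nlinarith
    have hlt : f xstar (V e xstar) < f xstar mstar + a :=
      lt_of_le_of_lt (hVf e he xstar mstar) (by linarith)
    have h1 : f xstar mstar + a ≤ f xstar (mstar - η) := by
      have := min_le_left (f xstar (mstar - η)) (f xstar (mstar + η))
      simp only [hadef]; linarith
    have h2 : f xstar mstar + a ≤ f xstar (mstar + η) := by
      have := min_le_right (f xstar (mstar - η)) (f xstar (mstar + η))
      simp only [hadef]; linarith
    rw [Real.dist_eq]
    exact convex_gap (hcvx xstar) hη ha h1 h2 hlt
  -- main sequential convergence
  have seqconv : ∀ e : ℕ → ℝ, (∀ j, 0 < e j) → Tendsto e atTop (nhds 0) →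
      Tendsto (fun j => V (e j) (xε (e j))) atTop (nhds mstar) := by
    intro e hepos he0
    obtain ⟨E, hE⟩ : ∃ E : ℝ, ∀ j, e j ≤ E := by
      obtain ⟨E, hE⟩ := he0.bddAbove_range
      exact ⟨E, fun j => hE (Set.mem_range_self j)⟩
    obtain ⟨z, hzX, hz⟩ := hX.exists_isMaxOn hXne (hfc1 mstar).continuousOn
    obtain ⟨w, hwX, hw⟩ := hX.exists_isMinOn hXne hA.continuousOn
    have hE0 : 0 < E := lt_of_lt_of_le (hepos 0) (hE 0)
    set K : ℝ := f z mstar with hKdef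
    set ub : ℝ := K + 2 * (c * E * γ) with hubdef
    set lb : ℝ := (K + 2 * (c * E * γ) - γ * (∑ i, p i * ∑ j, w j * y i j)) / (1 - γ)
      with hlbdef
    have hxkX : ∀ j, xε (e j) ∈ X := fun j => (hxε _ (hepos j)).1
    have hfub : ∀ j, f (xε (e j)) (V (e j) (xε (e j))) ≤ K + 2 * (c * E * γ) := by
      intro j
      have h1 := hVf (e j) (hepos j) (xε (e j)) mstar
      have h2 : f (xε (e j)) mstar ≤ K := hz (hxkX j)
      have h3 : c * e j * γ ≤ c * E * γ :=
        mul_le_mul_of_nonneg_right (mul_le_mul_of_nonneg_left (hE j) hc.le) hγ0.le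
      linarith
    have hub : ∀ j, V (e j) (xε (e j)) ≤ ub := by
      intro j
      have := (hlow (xε (e j)) (V (e j) (xε (e j)))).2
      have := hfub j
      rw [hubdef]; linarith
    have hlb : ∀ j, lb ≤ V (e j) (xε (e j)) := by
      intro j
      have h1 := (hlow (xε (e j)) (V (e j) (xε (e j)))).1
      have h2 := hfub j
      have h3 : γ * (∑ i, p i * ∑ jj, w jj * y i jj) ≤
          γ * (∑ i, p i * ∑ jj, xε (e j) jj * y i jj) :=
        mul_le_mul_of_nonneg_left (hw (hxkX j)) hγ0.le
      rw [hlbdef, div_le_iff_of_neg (by linarith)]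
      nlinarith
    refine tendsto_of_subseq_tendsto fun ns hns => ?_
    obtain ⟨q, hqmem, φ, hφ, hqt⟩ :=
      (hX.prod (isCompact_Icc (a := lb) (b := ub))).tendsto_subseq
        (x := fun j => (xε (e (ns j)), V (e (ns j)) (xε (e (ns j)))))
        (fun j => Set.mk_mem_prod (hxkX _) ⟨hlb _, hub _⟩)
    refine ⟨φ, ?_⟩
    have hxt : Tendsto (fun j => xε (e (ns (φ j)))) atTop (nhds q.1) :=
      (continuous_fst.tendsto q).comp hqt
    have hmt : Tendsto (fun j => V (e (ns (φ j))) (xε (e (ns (φ j))))) atTop (nhds q.2) :=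
      (continuous_snd.tendsto q).comp hqt
    have het : Tendsto (fun j => e (ns (φ j))) atTop (nhds 0) :=
      he0.comp (hns.comp hφ.tendsto_atTop)
    have hq1X : q.1 ∈ X := hqmem.1
    have hmem : ∀ m, f q.1 q.2 ≤ f q.1 m := by
      intro m
      have hle : ∀ j, f (xε (e (ns (φ j)))) (V (e (ns (φ j))) (xε (e (ns (φ j))))) ≤
          f (xε (e (ns (φ j)))) m + 2 * (c * e (ns (φ j)) * γ) :=
        fun j => hVf _ (hepos _) _ m
      have t1 : Tendsto (fun j => f (xε (e (ns (φ j)))) (V (e (ns (φ j))) (xε (e (ns (φ j))))))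
          atTop (nhds (f q.1 q.2)) := (hfc.tendsto q).comp hqt
      have t2 : Tendsto (fun j => f (xε (e (ns (φ j)))) m + 2 * (c * e (ns (φ j)) * γ))
          atTop (nhds (f q.1 m + 2 * (c * 0 * γ))) := by
        refine Tendsto.add (((hfc1 m).tendsto q.1).comp hxt) ?_
        exact tendsto_const_nhds.mul ((tendsto_const_nhds.mul het).mul tendsto_const_nhds)
      have := le_of_tendsto_of_tendsto' t1 t2 hle
      simpa using this
    have h1 : mstar ≤ q.2 := hVaRmin q.1 hq1X q.2 (by rw [hM]; exact hmem)
    have h2 : q.2 ≤ mstar := by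
      have hle : ∀ j, V (e (ns (φ j))) (xε (e (ns (φ j)))) ≤ V (e (ns (φ j))) xstar :=
        fun j => (hxε _ (hepos _)).2 xstar hxstar
      have t2 : Tendsto (fun j => V (e (ns (φ j))) xstar) atTop (nhds mstar) := by
        refine hVxstar.comp ?_
        rw [tendsto_nhdsWithin_iff]
        exact ⟨het, Eventually.of_forall fun j => hepos _⟩
      exact le_of_tendsto_of_tendsto' hmt t2 hle
    have hq2 : q.2 = mstar := le_antisymm h2 h1
    rw [← hq2]
    exact hmt
  -- Part 1 via sequences
  have part1 : Tendsto (fun e => V e (xε e)) (nhdsWithin 0 (Set.Ioi 0)) (nhds mstar) := by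
    rw [tendsto_iff_seq_tendsto]
    intro eseq heseq
    have hev : ∀ᶠ j in atTop, eseq j ∈ Set.Ioi (0:ℝ) :=
      heseq.eventually eventually_mem_nhdsWithin
    set e' : ℕ → ℝ := fun j => if 0 < eseq j then eseq j else 1 with he'def
    have h1 : ∀ j, 0 < e' j := by
      intro j
      by_cases h : 0 < eseq j <;> simp [he'def, h]
    have heq' : ∀ᶠ j in atTop, e' j = eseq j := hev.mono fun j h => if_pos h
    have he'0 : Tendsto e' atTop (nhds 0) :=
      (heseq.mono_right nhdsWithin_le_nhds).congr' (heq'.mono fun _ h => h.symm)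
    exact (seqconv e' h1 he'0).congr' (heq'.mono fun j h => by simp [Function.comp, h])
  refine ⟨part1, ?_⟩
  intro εν hpos htend xinf hcl
  have hXcl : xinf ∈ X := by
    have hcp : ClusterPt xinf (Filter.map (fun ν => xε (εν ν)) atTop) := hcl
    have : ClusterPt xinf (Filter.principal X) :=
      hcp.mono (le_principal_iff.mpr (mem_map.mpr
        (Eventually.of_forall fun ν => (hxε _ (hpos ν)).1)))
    have := mem_closure_iff_clusterPt.mpr this
    rwa [hX.isClosed.closure_eq] at this
  refine ⟨hXcl, ?_⟩
  have hm : Tendsto (fun ν => V (εν ν) (xε (εν ν))) atTop (nhds mstar) := seqconv εν hpos htend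
  have hpair : MapClusterPt ((xinf, mstar), (0:ℝ)) atTop
      (fun ν => ((xε (εν ν), V (εν ν) (xε (εν ν))), εν ν)) :=
    aux_mapClusterPt_prod (aux_mapClusterPt_prod hcl hm) htend
  have hkey : ∀ m, f xinf mstar ≤ f xinf m := by
    intro m
    set C : Set (((Fin n → ℝ) × ℝ) × ℝ) :=
      {q | f q.1.1 q.1.2 ≤ f q.1.1 m + 2 * (c * q.2 * γ)} with hCdef
    have hCclosed : IsClosed C := by
      refine isClosed_le (hfc.comp continuous_fst) ?_
      exact (((hfc1 m).comp (continuous_fst.comp continuous_fst))).add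
        (continuous_const.mul ((continuous_const.mul continuous_snd).mul continuous_const))
    have hmemC : ∀ ν, ((xε (εν ν), V (εν ν) (xε (εν ν))), εν ν) ∈ C :=
      fun ν => hVf _ (hpos ν) _ m
    have hptC : ((xinf, mstar), (0:ℝ)) ∈ C := by
      have hcp : ClusterPt ((xinf, mstar), (0:ℝ)) (Filter.principal C) :=
        hpair.clusterPt.mono (le_principal_iff.mpr (mem_map.mpr
          (Eventually.of_forall hmemC)))
      have := mem_closure_iff_clusterPt.mpr hcp
      rwa [hCclosed.closure_eq] at this
    have : f xinf mstar ≤ f xinf m + 2 * (c * 0 * γ) := hptC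
    simpa using this
  have hmstarM : mstar ∈ M xinf := by rw [hM]; exact hkey
  intro x' hx' m' hm'
  have h1 : mstar ≤ m' := hVaRmin x' hx' m' hm'
  have hbdd : BddBelow (M xinf) := by
    refine ⟨(f xinf mstar - γ * (∑ i, p i * ∑ j, xinf j * y i j)) / (1 - γ), ?_⟩
    intro m hmM
    rw [hM] at hmM
    have h2 : f xinf m ≤ f xinf mstar := hmM mstar
    have h3 := (hlow xinf m).1
    rw [div_le_iff_of_neg (by linarith)]
    nlinarith
  exact le_trans (csInf_le hbdd hmstarM) h1
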